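/- If a group G with finite generating set S contains two elements x, y ∈ S such that xy ∈ S and x, y generate a free monoid of rank 2, then ω(G,S) ≥ ((1+√5)/2)^2 = (3+√5)/2. -/

import Mathlib

open Filter

/-- The word length of `g` with respect to a generating set `S` (using letters from
`S ∪ S⁻¹`). -/
noncomputable def wordLength {G : Type*} [Group G] (S : Set G) (g : G) : ℕ :=
  sInf {n | ∃ l : List G, l.length = n ∧ (∀ x ∈ l, x ∈ S ∨ x⁻¹ ∈ S) ∧ l.prod = g}

/-- The growth function `F_{G,S}(n)`, counting elements of word length at most `n`. -/
noncomputable def growthFunction {G : Type*} [Group G] (S : Set G) (n : ℕ) : ℕ :=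
  Nat.card {g : G | wordLength S g ≤ n}

/-! ### Auxiliary combinatorics: words over the alphabet `{x, y, t = x*y}` avoiding `xy` -/

inductive L3 where
  | X : L3
  | Y : L3
  | T : L3
deriving DecidableEq

open L3

/-- no `X` immediately followed by `Y` -/
def okL3 (l : List L3) : Prop := List.Chain' (fun a b => ¬(a = X ∧ b = Y)) l

def expandL3 : L3 → List Bool
  | X => [true]
  | Y => [false]
  | T => [true, false]

def EL3 (l : List L3) : List Bool := (l.map expandL3).flatten

@[simp] lemma EL3_nil : EL3 [] = [] := rfl
@[simp] lemma EL3_cons (a : L3) (l : List L3) : EL3 (a :: l) = expandL3 a ++ EL3 l := rfl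

lemma EL3_ne_nil (a : L3) (l : List L3) : EL3 (a :: l) ≠ [] := by
  cases a <;> simp [expandL3]

lemma EL3_inj : ∀ (l₁ : List L3), ∀ l₂ : List L3, okL3 l₁ → okL3 l₂ → EL3 l₁ = EL3 l₂ → l₁ = l₂ := by
  intro l₁
  induction l₁ with
  | nil =>
    intro l₂ _ _ h
    cases l₂ with
    | nil => rfl
    | cons b u => exact absurd h.symm (EL3_ne_nil b u)
  | cons a s ih =>
    intro l₂ h1 h2 h
    cases l₂ with
    | nil => exact absurd h (EL3_ne_nil a s)
    | cons b u =>
      have h1' : okL3 s := h1.tail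
      have h2' : okL3 u := h2.tail
      cases a <;> cases b <;> simp [expandL3] at h
      · exact congrArg _ (ih u h1' h2' h)
      · -- a = X, b = T : EL3 s = false :: EL3 u, so s starts with Y, contradicting okL3 (X::s)
        exfalso
        cases s with
        | nil => simp at h
        | cons c s' =>
          cases c <;> simp [expandL3] at h
          · exact (List.isChain_cons_cons.mp h1).1 ⟨rfl, rfl⟩
      · exact congrArg _ (ih u h1' h2' h)
      · -- a = T, b = X : symmetric
        exfalso
        cases u with
        | nil => simp at h
        | cons c u' =>
          cases c <;> simp [expandL3] at h
          · exact (List.isChain_cons_cons.mp h2).1 ⟨rfl, rfl⟩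
      · exact congrArg _ (ih u h1' h2' h)

def BC : ℕ → Finset (List L3) × Finset (List L3)
  | 0 => ({[]}, {[]})
  | n + 1 =>
    let p := BC n
    ((p.1.image (Y :: ·) ∪ p.1.image (T :: ·)) ∪ p.2.image (X :: ·),
     p.1.image (T :: ·) ∪ p.2.image (X :: ·))

noncomputable def Bset (n : ℕ) := (BC n).1
noncomputable def Cset (n : ℕ) := (BC n).2

lemma Bset_succ (n : ℕ) :
    Bset (n+1) = ((Bset n).image (Y :: ·) ∪ (Bset n).image (T :: ·)) ∪ (Cset n).image (X :: ·) := rfl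
lemma Cset_succ (n : ℕ) :
    Cset (n+1) = (Bset n).image (T :: ·) ∪ (Cset n).image (X :: ·) := rfl
lemma Bset_zero : Bset 0 = {[]} := rfl
lemma Cset_zero : Cset 0 = {[]} := rfl

lemma cons_inj (a : L3) : Function.Injective (a :: ·) := fun _ _ h => (List.cons.injEq _ _ _ _).mp h |>.2

lemma okL3_cons {a : L3} {l : List L3} (h : okL3 l) (h2 : ∀ b, l.head? = some b → ¬(a = X ∧ b = Y)) :
    okL3 (a :: l) := List.isChain_cons.mpr ⟨h2, h⟩

lemma Bspec : ∀ n, (∀ l ∈ Bset n, l.length = n ∧ okL3 l) ∧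
    (∀ l ∈ Cset n, l.length = n ∧ okL3 l ∧ l.head? ≠ some Y) := by
  intro n
  induction n with
  | zero =>
    rw [Bset_zero, Cset_zero]
    simp [okL3]; exact List.isChain_nil
  | succ n ih =>
    obtain ⟨ihB, ihC⟩ := ih
    constructor
    · intro l hl
      rw [Bset_succ] at hl
      simp only [Finset.mem_union, Finset.mem_image] at hl
      rcases hl with (⟨m, hm, rfl⟩ | ⟨m, hm, rfl⟩) | ⟨m, hm, rfl⟩
      · obtain ⟨h1, h2⟩ := ihB m hm
        exact ⟨by simp [h1], okL3_cons h2 (by simp)⟩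
      · obtain ⟨h1, h2⟩ := ihB m hm
        exact ⟨by simp [h1], okL3_cons h2 (by simp)⟩
      · obtain ⟨h1, h2, h3⟩ := ihC m hm
        refine ⟨by simp [h1], okL3_cons h2 ?_⟩
        intro b hb hc
        exact h3 (by rw [hb, hc.2])
    · intro l hl
      rw [Cset_succ] at hl
      simp only [Finset.mem_union, Finset.mem_image] at hl
      rcases hl with ⟨m, hm, rfl⟩ | ⟨m, hm, rfl⟩
      · obtain ⟨h1, h2⟩ := ihB m hm
        exact ⟨by simp [h1], okL3_cons h2 (by simp), by simp⟩
      · obtain ⟨h1, h2, h3⟩ := ihC m hm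
        refine ⟨by simp [h1], okL3_cons h2 ?_, by simp⟩
        intro b hb hc
        exact h3 (by rw [hb, hc.2])

lemma Bcard : ∀ n, (Bset (n+1)).card = 2 * (Bset n).card + (Cset n).card ∧
    (Cset (n+1)).card = (Bset n).card + (Cset n).card := by
  intro n
  have d1 : Disjoint ((Bset n).image (Y :: ·)) ((Bset n).image (T :: ·)) := by
    rw [Finset.disjoint_left]
    rintro l hl hl'
    simp only [Finset.mem_image] at hl hl'
    obtain ⟨m, _, rfl⟩ := hl
    obtain ⟨m', _, h⟩ := hl'
    simp at h
  have d2 : Disjoint (((Bset n).image (Y :: ·)) ∪ ((Bset n).image (T :: ·))) ((Cset n).image (X :: ·)) := by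
    rw [Finset.disjoint_left]
    rintro l hl hl'
    simp only [Finset.mem_union, Finset.mem_image] at hl hl'
    obtain ⟨m', _, h⟩ := hl'
    rcases hl with ⟨m, _, rfl⟩ | ⟨m, _, rfl⟩ <;> simp at h
  have d3 : Disjoint ((Bset n).image (T :: ·)) ((Cset n).image (X :: ·)) := by
    rw [Finset.disjoint_left]
    rintro l hl hl'
    simp only [Finset.mem_image] at hl hl'
    obtain ⟨m, _, rfl⟩ := hl
    obtain ⟨m', _, h⟩ := hl'
    simp at h
  constructor
  · rw [Bset_succ, Finset.card_union_of_disjoint d2, Finset.card_union_of_disjoint d1,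
      Finset.card_image_of_injective _ (cons_inj _), Finset.card_image_of_injective _ (cons_inj _),
      Finset.card_image_of_injective _ (cons_inj _)]
    ring
  · rw [Cset_succ, Finset.card_union_of_disjoint d3,
      Finset.card_image_of_injective _ (cons_inj _), Finset.card_image_of_injective _ (cons_inj _)]

noncomputable def lam : ℝ := (3 + Real.sqrt 5) / 2

lemma lam_facts : lam ^ 2 = 3 * lam - 1 ∧ 2 ≤ lam ∧ lam ≤ 3 := by
  have h5 : Real.sqrt 5 ^ 2 = 5 := Real.sq_sqrt (by norm_num)
  have h1 : (2:ℝ) ≤ Real.sqrt 5 := by nlinarith [Real.sqrt_nonneg 5]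
  have h2 : Real.sqrt 5 ≤ 3 := by nlinarith [Real.sqrt_nonneg 5]
  refine ⟨by unfold lam; nlinarith, by unfold lam; nlinarith, by unfold lam; nlinarith⟩

lemma card_ge : ∀ n, lam ^ n ≤ ((Bset n).card : ℝ) ∧ (lam - 2) * lam ^ n ≤ ((Cset n).card : ℝ) := by
  obtain ⟨hsq, h2, h3⟩ := lam_facts
  have hpos : (0:ℝ) < lam := by linarith
  intro n
  induction n with
  | zero => rw [Bset_zero, Cset_zero]; simp; linarith
  | succ n ih =>
    obtain ⟨ihB, ihC⟩ := ih
    obtain ⟨e1, e2⟩ := Bcard n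
    have hp : (0:ℝ) ≤ lam ^ n := le_of_lt (pow_pos hpos n)
    constructor
    · rw [e1]; push_cast
      have h : lam ^ (n+1) = 2 * lam ^ n + (lam - 2) * lam ^ n := by ring
      rw [h]; linarith
    · rw [e2]; push_cast
      have h : (lam - 2) * lam ^ (n + 1) = lam ^ n + (lam - 2) * lam ^ n := by
        have hh : (lam - 2) * lam = lam - 1 := by nlinarith
        calc (lam - 2) * lam ^ (n+1) = ((lam-2)*lam) * lam ^ n := by ring
        _ = (lam - 1) * lam ^ n := by rw [hh]
        _ = lam ^ n + (lam - 2) * lam ^ n := by ring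
      rw [h]; linarith

section Aux

variable {G : Type*} [Group G]

def L3toG (x y : G) : L3 → G
  | L3.X => x
  | L3.Y => y
  | L3.T => x * y

lemma EL3_prod (x y : G) : ∀ l : List L3,
    ((EL3 l).map (fun b => bif b then x else y)).prod = (l.map (L3toG x y)).prod := by
  intro l
  induction l with
  | nil => rfl
  | cons a s ih =>
    rw [EL3_cons, List.map_append, List.prod_append, ih, List.map_cons, List.prod_cons]
    cases a <;> simp [expandL3, L3toG, mul_assoc]

/-- the ball of radius n is finite -/
lemma ball_finite (S : Finset G) (hS : Subgroup.closure (S : Set G) = ⊤) (n : ℕ) :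
    {g : G | wordLength (S : Set G) g ≤ n}.Finite := by
  classical
  set A : Set G := {a : G | a ∈ S ∨ a⁻¹ ∈ S} with hA
  have hAfin : A.Finite := by
    apply Set.Finite.subset ((S.finite_toSet).union (S.finite_toSet.inv))
    intro a ha
    rcases ha with h | h
    · exact Or.inl h
    · exact Or.inr (by simpa using h)
  have hLfin : {l : List G | l.length ≤ n ∧ ∀ a ∈ l, a ∈ A}.Finite := by
    haveI : Finite ↥A := hAfin.to_subtype
    have := Set.Finite.image (List.map (Subtype.val : ↥A → G)) (List.finite_length_le ↥A n)
    apply Set.Finite.subset this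
    rintro l ⟨hl1, hl2⟩
    refine ⟨l.attach.map (fun a => ⟨a.1, hl2 a.1 a.2⟩), by simpa using hl1, ?_⟩
    simp [List.map_map]
  apply Set.Finite.subset (hLfin.image List.prod)
  intro g hg
  simp only [Set.mem_setOf_eq] at hg
  have hne : {m | ∃ l : List G, l.length = m ∧ (∀ a ∈ l, a ∈ (S:Set G) ∨ a⁻¹ ∈ (S:Set G)) ∧ l.prod = g}.Nonempty := by
    have hg' : g ∈ Submonoid.closure ((S : Set G) ∪ (S : Set G)⁻¹) := by
      rw [← Subgroup.closure_toSubmonoid]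
      show g ∈ (Subgroup.closure (S:Set G)).toSubmonoid
      rw [hS]; trivial
    obtain ⟨l, hl1, hl2⟩ := Submonoid.exists_list_of_mem_closure hg'
    refine ⟨l.length, l, rfl, ?_, hl2⟩
    intro a ha
    rcases hl1 a ha with h | h
    · exact Or.inl h
    · exact Or.inr (Set.mem_inv.mp h)
  obtain ⟨l, hl1, hl2, hl3⟩ := Nat.sInf_mem hne
  exact ⟨l, ⟨by rw [hl1]; exact hg, fun a ha => hl2 a ha⟩, hl3⟩

end Aux

/-- If a group `G` with finite generating set `S` contains `x, y ∈ S` with `x * y ∈ S`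
such that `x, y` generate a free monoid of rank `2`, then
`ω(G,S) ≥ ((1+√5)/2)^2 = (3+√5)/2`. -/
theorem growth_rate_ge_golden_sq {G : Type*} [Group G]
    (S : Finset G) (hS : Subgroup.closure (S : Set G) = ⊤)
    (x y : G) (hx : x ∈ S) (hy : y ∈ S) (hxy : x * y ∈ S)
    (hfree : ∀ u v : List Bool,
      (u.map fun b => bif b then x else y).prod = (v.map fun b => bif b then x else y).prod →
      u = v)
    (ω : ℝ)
    (hω : Tendsto (fun n : ℕ => (growthFunction (S : Set G) n : ℝ) ^ (1 / (n : ℝ)))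
      atTop (nhds ω)) :
    (3 + Real.sqrt 5) / 2 ≤ ω := by
  classical
  obtain ⟨hsq, h2lam, h3lam⟩ := lam_facts
  have hlampos : (0:ℝ) < lam := by linarith
  -- step 1: growthFunction bound
  have key : ∀ n : ℕ, lam ^ n ≤ (growthFunction (S : Set G) n : ℝ) := by
    intro n
    refine le_trans (card_ge n).1 ?_
    norm_cast
    have hfin := ball_finite S hS n
    haveI : Finite ↥{g : G | wordLength (S : Set G) g ≤ n} := hfin.to_subtype
    rw [growthFunction, ← Nat.card_eq_finsetCard (Bset n)]
    -- injection from Bset n into the ball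
    have hmem : ∀ l ∈ Bset n, wordLength (S : Set G) (l.map (L3toG x y)).prod ≤ n := by
      intro l hl
      obtain ⟨hlen, _⟩ := (Bspec n).1 l hl
      apply Nat.sInf_le
      refine ⟨l.map (L3toG x y), by simp [hlen], ?_, rfl⟩
      intro a ha
      simp only [List.mem_map] at ha
      obtain ⟨c, _, rfl⟩ := ha
      left
      cases c
      · exact hx
      · exact hy
      · exact hxy
    have hinj : ∀ l₁ ∈ Bset n, ∀ l₂ ∈ Bset n,
        (l₁.map (L3toG x y)).prod = (l₂.map (L3toG x y)).prod → l₁ = l₂ := by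
      intro l₁ h₁ l₂ h₂ hp
      have e1 := EL3_prod x y l₁
      have e2 := EL3_prod x y l₂
      have := hfree (EL3 l₁) (EL3 l₂) (by rw [e1, e2, hp])
      exact EL3_inj l₁ l₂ ((Bspec n).1 l₁ h₁).2 ((Bspec n).1 l₂ h₂).2 this
    exact Nat.card_le_card_of_injective
      (fun l : ↥(Bset n) => (⟨(l.1.map (L3toG x y)).prod, hmem l.1 l.2⟩ :
        ↥{g : G | wordLength (S : Set G) g ≤ n}))
      (fun l₁ l₂ h => Subtype.ext (hinj l₁.1 l₁.2 l₂.1 l₂.2 (congrArg Subtype.val h)))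
  -- step 2: pass to the limit
  show lam ≤ ω
  refine ge_of_tendsto hω (eventually_atTop.mpr ⟨1, fun n hn => ?_⟩)
  have hn0 : (n:ℝ) ≠ 0 := Nat.cast_ne_zero.mpr (by omega)
  have h1 : lam = (lam ^ n) ^ (1 / (n:ℝ)) := by
    rw [← Real.rpow_natCast lam n, ← Real.rpow_mul (le_of_lt hlampos),
      mul_one_div, div_self hn0, Real.rpow_one]
  rw [h1]
  exact Real.rpow_le_rpow (le_of_lt (pow_pos hlampos n)) (key n)
    (by positivity)
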